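/- Let o be a noetherian commutative ring, F a nonarchimedean local field, B the upper triangular subgroup of GL(2,F), and let V be a smooth representation of B over o. Let V_0 and V_0' be two o[B_0 Z]-submodules of V (for the restricted action of B_0 Z), each finitely generated over o[B_0 Z] and each generating V as o[B]-module. Then there exists an o[B_0 Z]-submodule M of V, finitely generated over o[B_0 Z], such that <B^+ V_0> + M = <B^+ V_0'> + M, where <B^+ W> denotes the o-submodule of V generated by the elements bw for b in B^+ and w in W. -/

import Mathlib

noncomputable section
attribute [local instance] Classical.propDecidable
open Pointwise


/-! ### Generalities on smooth representations over a commutative ring `o` -/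

section RepPrelim

variable (o : Type) [CommRing o]

/-- The `o`-submodule of `V` generated by `{s • w | s ∈ S, w ∈ W}`; written `<S W>` in the paper. -/
def gspan {H : Type} (V : Type) [AddCommGroup V] [Module o V] [SMul H V]
    (S : Set H) (W : Set V) : Submodule o V :=
  Submodule.span o {v : V | ∃ s ∈ S, ∃ w ∈ W, v = s • w}

/-- A submodule `N` is stable under the set `S` of group elements. -/
def IsStableSub {H : Type} (V : Type) [AddCommGroup V] [Module o V] [SMul H V]
    (S : Set H) (N : Submodule o V) : Prop :=
  ∀ s ∈ S, ∀ v ∈ N, s • v ∈ N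

/-- `N` is a finitely generated module over `o[S]`. -/
def IsFGOver {H : Type} (V : Type) [AddCommGroup V] [Module o V] [SMul H V]
    (S : Set H) (N : Submodule o V) : Prop :=
  ∃ X : Finset V, (X : Set V) ⊆ (N : Set V) ∧ N = gspan o V S (X : Set V)

/-- The submodule of `S`-invariants. -/
def invariantsSub (H : Type) [Group H] (V : Type) [AddCommGroup V] [Module o V]
    [DistribMulAction H V] [SMulCommClass H o V] (S : Set H) : Submodule o V where
  carrier := {v | ∀ s ∈ S, s • v = v}
  add_mem' := by intro a b ha hb s hs; rw [smul_add, ha s hs, hb s hs]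
  zero_mem' := by intro s hs; exact smul_zero s
  smul_mem' := by intro c v hv s hs; rw [smul_comm, hv s hs]

/-- The action of a fixed group element as an `o`-linear map. -/
def actLin (H : Type) [Group H] (V : Type) [AddCommGroup V] [Module o V]
    [DistribMulAction H V] [SMulCommClass H o V] (g : H) : V →ₗ[o] V where
  toFun v := g • v
  map_add' := smul_add g
  map_smul' c v := by simpa using smul_comm g c v

/-- `V` has finite length as an `o[H]`-module: it admits a composition series of
`H`-stable `o`-submodules. -/
def IsFiniteLengthRep (H : Type) [Group H] (V : Type) [AddCommGroup V] [Module o V]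
    [DistribMulAction H V] : Prop :=
  ∃ (n : ℕ) (c : Fin (n + 1) → Submodule o V),
    c 0 = ⊥ ∧ c (Fin.last n) = ⊤ ∧
    (∀ i, IsStableSub o V (Set.univ : Set H) (c i)) ∧
    (∀ i : Fin n, c i.castSucc < c i.succ) ∧
    (∀ i : Fin n, ∀ N : Submodule o V, IsStableSub o V (Set.univ : Set H) N →
      c i.castSucc ≤ N → N ≤ c i.succ → N = c i.castSucc ∨ N = c i.succ)

/-- Smoothness: each vector has open stabilizer. -/
def IsSmoothRep (H : Type) [Group H] [TopologicalSpace H] (V : Type) [AddCommGroup V]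
    [Module o V] [DistribMulAction H V] : Prop :=
  ∀ v : V, IsOpen {h : H | h • v = v}

/-- Admissibility: invariants under any compact open subgroup form a f.g. `o`-module. -/
def IsAdmissibleRep (H : Type) [Group H] [TopologicalSpace H] (V : Type) [AddCommGroup V]
    [Module o V] [DistribMulAction H V] [SMulCommClass H o V] : Prop :=
  ∀ H' : Subgroup H, IsCompact (H' : Set H) → IsOpen (H' : Set H) →
    (invariantsSub o H V (H' : Set H)).FG

end RepPrelim

/-! ### Compact induction `ind_{S}^{H}(V₀)` and finite presentations -/

section Induction

variable (o : Type) [CommRing o]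
variable {H : Type} [Group H] {V : Type} [AddCommGroup V] [Module o V]
variable [DistribMulAction H V] [SMulCommClass H o V]

/-- The compact induction `ind_S^H (V₀)`, realized as the `o`-module of functions
`f : H → V` with values in `V₀`, satisfying `f (s * h) = s • f h` for `s ∈ S`, and
supported on finitely many right cosets `S * x`. -/
def Ind (S : Subgroup H) (V0 : Submodule o V) : Submodule o (H → V) where
  carrier := {f | (∀ h, f h ∈ V0) ∧ (∀ s ∈ S, ∀ h, f (s * h) = s • f h) ∧
      ∃ X : Finset H, ∀ h, f h ≠ 0 → ∃ s ∈ S, ∃ x ∈ X, h = s * x}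
  add_mem' := by
    rintro f g ⟨hf1, hf2, Xf, hXf⟩ ⟨hg1, hg2, Xg, hXg⟩
    refine ⟨fun h => V0.add_mem (hf1 h) (hg1 h),
      fun s hs h => by simp only [Pi.add_apply, hf2 s hs h, hg2 s hs h, smul_add],
      Xf ∪ Xg, fun h hh => ?_⟩
    by_cases hf : f h = 0
    · have hg : g h ≠ 0 := fun h0 => hh (by simp [Pi.add_apply, hf, h0])
      obtain ⟨s, hs, x, hx, hxx⟩ := hXg h hg
      exact ⟨s, hs, x, Finset.mem_union_right _ hx, hxx⟩
    · obtain ⟨s, hs, x, hx, hxx⟩ := hXf h hf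
      exact ⟨s, hs, x, Finset.mem_union_left _ hx, hxx⟩
  zero_mem' :=
    ⟨fun _ => V0.zero_mem, fun s _ _ => (smul_zero s).symm, ∅, fun h hh => absurd rfl hh⟩
  smul_mem' := by
    rintro c f ⟨hf1, hf2, Xf, hXf⟩
    refine ⟨fun h => V0.smul_mem c (hf1 h),
      fun s hs h => by
        simp only [Pi.smul_apply, hf2 s hs h]
        exact (smul_comm s c (f h)).symm,
      Xf, fun h hh => hXf h (fun h0 => hh (by simp [Pi.smul_apply, h0]))⟩

variable {S : Subgroup H} {V0 : Submodule o V}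

/-- Right translation, giving the `H`-action on the compact induction. -/
def indTrans (g : H) (f : H → V) : H → V := fun h => f (h * g)

lemma indTrans_mem (g : H) {f : H → V} (hf : f ∈ Ind o S V0) : indTrans g f ∈ Ind o S V0 := by
  obtain ⟨h1, h2, X, hX⟩ := hf
  refine ⟨fun h => h1 _, fun s hs h => by
      simpa [indTrans, mul_assoc] using h2 s hs (h * g),
    X.image (· * g⁻¹), fun h hh => ?_⟩
  obtain ⟨s, hs, x, hx, hxx⟩ := hX (h * g) hh
  refine ⟨s, hs, x * g⁻¹, Finset.mem_image_of_mem _ hx, ?_⟩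
  rw [← mul_assoc, ← hxx, mul_assoc, mul_inv_cancel, mul_one]

instance : SMul H (Ind o S V0) :=
  ⟨fun g f => ⟨indTrans g (f : H → V), indTrans_mem o g f.2⟩⟩

lemma ind_smul_apply (g : H) (f : Ind o S V0) (h : H) :
    ((g • f : Ind o S V0) : H → V) h = (f : H → V) (h * g) := rfl

instance : MulAction H (Ind o S V0) where
  one_smul f := Subtype.ext (funext fun h => by simp [ind_smul_apply])
  mul_smul g1 g2 f := Subtype.ext (funext fun h => by simp [ind_smul_apply, mul_assoc])

instance : DistribMulAction H (Ind o S V0) where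
  smul_add g f1 f2 := Subtype.ext (funext fun h => rfl)
  smul_zero g := Subtype.ext (funext fun h => rfl)

instance : SMulCommClass H o (Ind o S V0) :=
  ⟨fun g c f => Subtype.ext (funext fun h => rfl)⟩

/-- The function `[1, v]` supported on `S`, with value `v` at `1`. -/
def unitFn (S : Subgroup H) (v : V) : H → V := fun h => if h ∈ S then h • v else 0

lemma unitFn_mem (hst : IsStableSub o V (S : Set H) V0) {v : V} (hv : v ∈ V0) :
    unitFn S v ∈ Ind o S V0 := by
  refine ⟨fun h => ?_, fun s hs h => ?_, {1}, fun h hh => ?_⟩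
  · by_cases h1 : h ∈ S
    · simpa [unitFn, h1] using hst h h1 v hv
    · simp [unitFn, h1, V0.zero_mem]
  · by_cases h1 : h ∈ S
    · have hsh : s * h ∈ S := S.mul_mem hs h1
      simp [unitFn, h1, hsh, mul_smul]
    · have hsh : s * h ∉ S := fun hc => h1 (by simpa using S.mul_mem (S.inv_mem hs) hc)
      simp [unitFn, h1, hsh]
  · by_cases h1 : h ∈ S
    · exact ⟨h, h1, 1, Finset.mem_singleton_self 1, (mul_one h).symm⟩
    · simp [unitFn, h1] at hh

/-- The element `[1, v]` of the compact induction. -/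
def unitElt (hst : IsStableSub o V (S : Set H) V0) {v : V} (hv : v ∈ V0) : Ind o S V0 :=
  ⟨unitFn S v, unitFn_mem o hst hv⟩

/-- `P` is the natural presentation map `ind_S^H (V₀) → V`: it is `H`-equivariant and sends
`[1, v]` to `v`. -/
def IsPresMap (hst : IsStableSub o V (S : Set H) V0) (P : Ind o S V0 →ₗ[o] V) : Prop :=
  (∀ (g : H) (f : Ind o S V0), P (g • f) = g • P f) ∧
  (∀ v (hv : v ∈ V0), P (unitElt o hst hv) = v)

end Induction

/-- `V₀ ⊆ V` yields a finite presentation `ind_S^H (V₀) → V`: `V₀` is an `S`-stable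
`o`-submodule, finitely generated over `o[S]`, generating `V` over `o[H]`, and the kernel of
the natural presentation map is finitely generated over `o[H]`. -/
def FinitelyPresentedVia (o : Type) [CommRing o] {H : Type} [Group H] {V : Type}
    [AddCommGroup V] [Module o V] [DistribMulAction H V] [SMulCommClass H o V]
    (S : Subgroup H) (V0 : Submodule o V) : Prop :=
  ∃ hst : IsStableSub o V (S : Set H) V0,
    IsFGOver o V (S : Set H) V0 ∧ gspan o V (Set.univ : Set H) (V0 : Set V) = ⊤ ∧
    ∃ P : Ind o S V0 →ₗ[o] V, IsPresMap o hst P ∧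
      IsFGOver o (Ind o S V0) (Set.univ : Set H) (LinearMap.ker P)

/-- `V` is of finite presentation relative to the open subgroup `S`. -/
def HasFinitePres (o : Type) [CommRing o] {H : Type} [Group H] (V : Type)
    [AddCommGroup V] [Module o V] [DistribMulAction H V] [SMulCommClass H o V]
    (S : Subgroup H) : Prop :=
  ∃ V0 : Submodule o V, FinitelyPresentedVia o S V0


/-! ### The group `GL(2,F)` over a nonarchimedean local field `F` -/

open Matrix

/-- Bundle of data making the field `F` a nonarchimedean local field: the valuation
ring `O`, a uniformizer `ϖ` generating the maximal ideal, finiteness of the residue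
field, compatibility of the topology with the valuation, and local compactness
(equivalently, completeness). -/
structure NALF (F : Type) [Field F] [TopologicalSpace F] [IsTopologicalRing F] where
  O : Subring F
  isValRing : ∀ x : F, x ≠ 0 → x ∈ O ∨ x⁻¹ ∈ O
  ϖ : F
  ϖ_mem : ϖ ∈ O
  ϖ_ne_zero : ϖ ≠ 0
  ϖ_not_unit : ϖ⁻¹ ∉ O
  ϖ_gen : ∀ x ∈ O, x⁻¹ ∉ O → x / ϖ ∈ O
  residue_finite : Finite (↥O ⧸ Ideal.span {(⟨ϖ, ϖ_mem⟩ : ↥O)})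
  nhds_zero : ∀ s : Set F, s ∈ nhds (0 : F) ↔ ∃ n : ℕ, {x : F | ∃ y ∈ O, x = ϖ ^ n * y} ⊆ s
  locallyCompact : LocallyCompactSpace F

variable (F : Type) [Field F]

lemma GL2.inv_entry_ne (g : GL (Fin 2) F)
    (hg : (g : Matrix (Fin 2) (Fin 2) F) 1 0 = 0) :
    ((g⁻¹ : GL (Fin 2) F) : Matrix (Fin 2) (Fin 2) F) 1 0 = 0 := by
  have hAC : (g : Matrix (Fin 2) (Fin 2) F) * ((g⁻¹ : GL (Fin 2) F) : Matrix (Fin 2) (Fin 2) F)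
      = 1 := by
    rw [← Units.val_mul, mul_inv_cancel, Units.val_one]
  have h1 : ((g : Matrix (Fin 2) (Fin 2) F) *
      ((g⁻¹ : GL (Fin 2) F) : Matrix (Fin 2) (Fin 2) F)) 1 0 = 0 := by
    rw [hAC]; exact Matrix.one_apply_ne (by decide)
  have h2 : ((g : Matrix (Fin 2) (Fin 2) F) *
      ((g⁻¹ : GL (Fin 2) F) : Matrix (Fin 2) (Fin 2) F)) 1 1 = 1 := by
    rw [hAC]; exact Matrix.one_apply_eq 1
  rw [Matrix.mul_apply, Fin.sum_univ_two, hg, zero_mul, zero_add] at h1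
  rw [Matrix.mul_apply, Fin.sum_univ_two, hg, zero_mul, zero_add] at h2
  rcases mul_eq_zero.mp h1 with h | h
  · exact absurd h2 (by rw [h, zero_mul]; exact zero_ne_one)
  · exact h

/-- The upper triangular (Borel) subgroup `B ⊆ GL(2,F)`. -/
def Bgr : Subgroup (GL (Fin 2) F) where
  carrier := {g | (g : Matrix (Fin 2) (Fin 2) F) 1 0 = 0}
  one_mem' := by
    show ((1 : GL (Fin 2) F) : Matrix (Fin 2) (Fin 2) F) 1 0 = 0
    rw [Units.val_one]; exact Matrix.one_apply_ne (by decide)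
  mul_mem' := by
    intro a b ha hb
    show ((a * b : GL (Fin 2) F) : Matrix (Fin 2) (Fin 2) F) 1 0 = 0
    rw [Units.val_mul, Matrix.mul_apply, Fin.sum_univ_two]
    simp only [Set.mem_setOf_eq] at ha hb
    rw [ha, hb, zero_mul, mul_zero, add_zero]
  inv_mem' := by
    intro a ha
    exact GL2.inv_entry_ne F a ha

/-- The maximal compact subgroup `K = GL(2, O_F)` of `GL(2,F)`. -/
def Kgr (O : Subring F) : Subgroup (GL (Fin 2) F) where
  carrier := {g | (∀ i j, (g : Matrix (Fin 2) (Fin 2) F) i j ∈ O) ∧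
      (∀ i j, ((g⁻¹ : GL (Fin 2) F) : Matrix (Fin 2) (Fin 2) F) i j ∈ O)}
  one_mem' := by
    constructor <;>
    · intro i j
      simp only [inv_one, Units.val_one]
      by_cases h : i = j
      · rw [h, Matrix.one_apply_eq]; exact O.one_mem
      · rw [Matrix.one_apply_ne h]; exact O.zero_mem
  mul_mem' := by
    rintro a b ⟨ha1, ha2⟩ ⟨hb1, hb2⟩
    constructor
    · intro i j
      rw [Units.val_mul, Matrix.mul_apply]
      exact Subring.sum_mem O fun k _ => O.mul_mem (ha1 i k) (hb1 k j)
    · intro i j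
      rw [_root_.mul_inv_rev, Units.val_mul, Matrix.mul_apply]
      exact Subring.sum_mem O fun k _ => O.mul_mem (hb2 i k) (ha2 k j)
  inv_mem' := by
    rintro a ⟨ha1, ha2⟩
    refine ⟨ha2, ?_⟩
    rw [inv_inv]
    exact ha1

/-- For a subgroup `A` of a group `G`, the subgroup `A · Z(G)`. -/
def centMul {G : Type} [Group G] (A : Subgroup G) : Subgroup G where
  carrier := {g | ∃ a ∈ A, ∃ z ∈ Subgroup.center G, g = a * z}
  one_mem' := ⟨1, A.one_mem, 1, (Subgroup.center G).one_mem, (one_mul 1).symm⟩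
  mul_mem' := by
    rintro x y ⟨a, ha, z, hz, rfl⟩ ⟨a', ha', z', hz', rfl⟩
    refine ⟨a * a', A.mul_mem ha ha', z * z', (Subgroup.center G).mul_mem hz hz', ?_⟩
    have hcz : a' * z = z * a' := Subgroup.mem_center_iff.mp hz a'
    calc a * z * (a' * z') = a * (z * a' * z') := by
          rw [mul_assoc]; rw [mul_assoc z a' z']
      _ = a * (a' * z * z') := by rw [← hcz]
      _ = a * a' * (z * z') := by rw [mul_assoc a a']; rw [mul_assoc a' z z']
  inv_mem' := by
    rintro x ⟨a, ha, z, hz, rfl⟩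
    refine ⟨a⁻¹, A.inv_mem ha, z⁻¹, (Subgroup.center G).inv_mem hz, ?_⟩
    rw [_root_.mul_inv_rev]
    exact (Subgroup.mem_center_iff.mp ((Subgroup.center G).inv_mem hz) a⁻¹).symm

variable [TopologicalSpace F] [IsTopologicalRing F] (L : NALF F)

/-- The element `t = diag(ϖ, 1)`. -/
def tGL : GL (Fin 2) F :=
  Matrix.GeneralLinearGroup.mkOfDetNeZero !![L.ϖ, 0; 0, 1]
    (by rw [Matrix.det_fin_two_of]; simpa using L.ϖ_ne_zero)

lemma tGL_val : (tGL F L : Matrix (Fin 2) (Fin 2) F) = !![L.ϖ, 0; 0, 1] := rfl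

/-- The unipotent element `u(x) = (1 x; 0 1)`. -/
def uGL (x : F) : GL (Fin 2) F :=
  Matrix.GeneralLinearGroup.mkOfDetNeZero !![1, x; 0, 1]
    (by rw [Matrix.det_fin_two_of]; simp)

lemma uGL_val (x : F) : (uGL F x : Matrix (Fin 2) (Fin 2) F) = !![1, x; 0, 1] := rfl

/-- The element `ω = (0 1; ϖ 0)`. -/
def ωGL : GL (Fin 2) F :=
  Matrix.GeneralLinearGroup.mkOfDetNeZero !![0, 1; L.ϖ, 0]
    (by rw [Matrix.det_fin_two_of]; simpa using L.ϖ_ne_zero)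

lemma ωGL_val : (ωGL F L : Matrix (Fin 2) (Fin 2) F) = !![0, 1; L.ϖ, 0] := rfl

/-- `B₀ = B ∩ K`: integral upper triangular matrices with unit diagonal. -/
def B0gr : Subgroup (GL (Fin 2) F) := Bgr F ⊓ Kgr F L.O

/-- The subgroup `KZ`. -/
def KZgr : Subgroup (GL (Fin 2) F) := centMul (Kgr F L.O)

/-- The subgroup `B₀Z`. -/
def B0Zgr : Subgroup (GL (Fin 2) F) := centMul (B0gr F L)

/-- The monoid `B⁺ = ⋃ₙ B₀ Z tⁿ`, as a subset of `GL(2,F)`. -/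
def BplusGL : Set (GL (Fin 2) F) :=
  {g | ∃ b ∈ B0Zgr F L, ∃ n : ℕ, g = b * (tGL F L) ^ n}

lemma tGL_mem_Bgr : tGL F L ∈ Bgr F := by
  show (tGL F L : Matrix (Fin 2) (Fin 2) F) 1 0 = 0
  rw [tGL_val]
  simp

lemma uGL_mem_Bgr (x : F) : uGL F x ∈ Bgr F := by
  show (uGL F x : Matrix (Fin 2) (Fin 2) F) 1 0 = 0
  rw [uGL_val]
  simp

/-- `t` as an element of `B`. -/
def tB : ↥(Bgr F) := ⟨tGL F L, tGL_mem_Bgr F L⟩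

/-- `u(x)` as an element of `B`. -/
def uB (x : F) : ↥(Bgr F) := ⟨uGL F x, uGL_mem_Bgr F x⟩

/-- The monoid `B⁺` as a subset of `B`. -/
def BplusB : Set ↥(Bgr F) := {b | (b : GL (Fin 2) F) ∈ BplusGL F L}

/-- The subgroup `B₀Z` of `B`. -/
def B0Zb : Subgroup ↥(Bgr F) := (B0Zgr F L).comap (Bgr F).subtype

/-- The subgroup `B ∩ KZ` of `B`. -/
def BcapKZb : Subgroup ↥(Bgr F) := (KZgr F L).comap (Bgr F).subtype

/-- The compact group `U₀ = U(O_F)` of integral upper unipotent matrices, as a subset. -/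
def U0set : Set (GL (Fin 2) F) :=
  {g | (g : Matrix (Fin 2) (Fin 2) F) 0 0 = 1 ∧ (g : Matrix (Fin 2) (Fin 2) F) 1 1 = 1 ∧
    (g : Matrix (Fin 2) (Fin 2) F) 1 0 = 0 ∧ (g : Matrix (Fin 2) (Fin 2) F) 0 1 ∈ L.O}

/-- `U_m = U(p_F^m O_F)`, as a subset of `GL(2,F)`. -/
def UmSet (m : ℕ) : Set (GL (Fin 2) F) :=
  {g | (g : Matrix (Fin 2) (Fin 2) F) 0 0 = 1 ∧ (g : Matrix (Fin 2) (Fin 2) F) 1 1 = 1 ∧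
    (g : Matrix (Fin 2) (Fin 2) F) 1 0 = 0 ∧
    ∃ y ∈ L.O, (g : Matrix (Fin 2) (Fin 2) F) 0 1 = L.ϖ ^ m * y}

/-- `U_m⁻ = U⁻(p_F^m O_F)`, the lower unipotent congruence subgroups, as a subset. -/
def UmMinusSet (m : ℕ) : Set (GL (Fin 2) F) :=
  {g | (g : Matrix (Fin 2) (Fin 2) F) 0 0 = 1 ∧ (g : Matrix (Fin 2) (Fin 2) F) 1 1 = 1 ∧
    (g : Matrix (Fin 2) (Fin 2) F) 0 1 = 0 ∧
    ∃ y ∈ L.O, (g : Matrix (Fin 2) (Fin 2) F) 1 0 = L.ϖ ^ m * y}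

/-- `T₀ = T(O_F)`: diagonal matrices with unit entries in `O_F`, as a subset. -/
def T0set : Set (GL (Fin 2) F) :=
  {g | (g : Matrix (Fin 2) (Fin 2) F) 1 0 = 0 ∧ (g : Matrix (Fin 2) (Fin 2) F) 0 1 = 0 ∧
    (g : Matrix (Fin 2) (Fin 2) F) 0 0 ∈ L.O ∧ ((g : Matrix (Fin 2) (Fin 2) F) 0 0)⁻¹ ∈ L.O ∧
    (g : Matrix (Fin 2) (Fin 2) F) 1 1 ∈ L.O ∧ ((g : Matrix (Fin 2) (Fin 2) F) 1 1)⁻¹ ∈ L.O}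

/-- The Iwahori subgroup `I ⊆ K`, as a subset: integral matrices whose reduction is
upper triangular. -/
def Iset : Set (GL (Fin 2) F) :=
  {g | g ∈ Kgr F L.O ∧ ∃ y ∈ L.O, (g : Matrix (Fin 2) (Fin 2) F) 1 0 = L.ϖ * y}

/-- The pro-`p` Iwahori subgroup `I₁ ⊆ I`, as a subset: integral matrices whose
reduction is upper unipotent. -/
def I1set : Set (GL (Fin 2) F) :=
  {g | g ∈ Kgr F L.O ∧ (∃ y ∈ L.O, (g : Matrix (Fin 2) (Fin 2) F) 1 0 = L.ϖ * y) ∧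
    (∃ y ∈ L.O, (g : Matrix (Fin 2) (Fin 2) F) 0 0 - 1 = L.ϖ * y) ∧
    (∃ y ∈ L.O, (g : Matrix (Fin 2) (Fin 2) F) 1 1 - 1 = L.ϖ * y)}

/-- The set `IZ`. -/
def IZset : Set (GL (Fin 2) F) :=
  {g | ∃ i ∈ Iset F L, ∃ z ∈ Subgroup.center (GL (Fin 2) F), g = i * z}

/-- The set `ωIZ`. -/
def ωIZset : Set (GL (Fin 2) F) := {g | ∃ h ∈ IZset F L, g = ωGL F L * h}


/-! ### Auxiliary lemmas for statement 2 -/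

section GspanAux

variable (o : Type) [CommRing o]
variable {H : Type} [Group H] {V : Type} [AddCommGroup V] [Module o V]
variable [DistribMulAction H V] [SMulCommClass H o V]

lemma mem_gspan {S : Set H} {W : Set V} {s : H} {w : V} (hs : s ∈ S) (hw : w ∈ W) :
    s • w ∈ gspan o V S W :=
  Submodule.subset_span ⟨s, hs, w, hw, rfl⟩

lemma gspan_mono {S : Set H} {W W' : Set V} (h : W ⊆ W') : gspan o V S W ≤ gspan o V S W' :=
  Submodule.span_mono (by rintro v ⟨s, hs, w, hw, rfl⟩; exact ⟨s, hs, w, h hw, rfl⟩)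

lemma smul_mem_gspan {S S' : Set H} {W : Set V} {b : H} (hb : ∀ s ∈ S, b * s ∈ S')
    {v : V} (hv : v ∈ gspan o V S W) : b • v ∈ gspan o V S' W := by
  have hv' : v ∈ Submodule.span o {v : V | ∃ s ∈ S, ∃ w ∈ W, v = s • w} := hv
  clear hv
  induction hv' using Submodule.span_induction with
  | mem x hx =>
      obtain ⟨s, hs, w, hw, rfl⟩ := hx
      rw [← mul_smul]
      exact mem_gspan o (hb s hs) hw
  | zero => rw [smul_zero]; exact zero_mem _
  | add x y hx hy ihx ihy => rw [smul_add]; exact add_mem ihx ihy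
  | smul c x hx ih => rw [smul_comm]; exact Submodule.smul_mem _ c ih

lemma gspan_gspan_le {P P' S : Set H} {W : Set V} (h : ∀ p ∈ P, ∀ s ∈ S, p * s ∈ P') :
    gspan o V P ((gspan o V S W : Submodule o V) : Set V) ≤ gspan o V P' W := by
  refine Submodule.span_le.2 ?_
  rintro v ⟨p, hp, w, hw, rfl⟩
  exact smul_mem_gspan o (fun s hs => h p hp s hs) hw

lemma gspan_exists_pow (τ : H) (P : Set H) (hτ : ∀ n : ℕ, τ ^ n ∈ P)
    (hPmul : ∀ p ∈ P, ∀ q ∈ P, p * q ∈ P)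
    (hcof : ∀ b : H, ∃ n : ℕ, τ ^ n * b ∈ P)
    (V1 : Submodule o V) (hgen : gspan o V (Set.univ : Set H) (V1 : Set V) = ⊤)
    (v : V) : ∃ n : ℕ, τ ^ n • v ∈ gspan o V P (V1 : Set V) := by
  have hbump : ∀ (k : ℕ) (w : V), w ∈ gspan o V P (V1 : Set V) →
      τ ^ k • w ∈ gspan o V P (V1 : Set V) := fun k w hw =>
    smul_mem_gspan o (fun p hp => hPmul _ (hτ k) p hp) hw
  have hv : v ∈ Submodule.span o
      {x : V | ∃ s ∈ (Set.univ : Set H), ∃ w ∈ (V1 : Set V), x = s • w} := by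
    have : v ∈ gspan o V (Set.univ : Set H) (V1 : Set V) := by rw [hgen]; exact Submodule.mem_top
    exact this
  induction hv using Submodule.span_induction with
  | mem x hx =>
      obtain ⟨b, -, w, hw, rfl⟩ := hx
      obtain ⟨n, hn⟩ := hcof b
      exact ⟨n, by rw [← mul_smul]; exact mem_gspan o hn hw⟩
  | zero => exact ⟨0, by rw [smul_zero]; exact zero_mem _⟩
  | add x y hx hy ihx ihy =>
      obtain ⟨n1, h1⟩ := ihx
      obtain ⟨n2, h2⟩ := ihy
      refine ⟨n1 + n2, ?_⟩
      rw [smul_add]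
      refine add_mem ?_ ?_
      · rw [add_comm n1 n2, pow_add, mul_smul]; exact hbump n2 _ h1
      · rw [pow_add, mul_smul]; exact hbump n1 _ h2
  | smul c x hx ih =>
      obtain ⟨n, hn⟩ := ih
      exact ⟨n, by rw [smul_comm]; exact Submodule.smul_mem _ c hn⟩

end GspanAux

section NALFAux

lemma NALF.exists_not_dvd {y : F} (hy : y ≠ 0) : ∃ N : ℕ, ¬∃ z ∈ L.O, y = L.ϖ ^ N * z := by
  by_contra h
  push_neg at h
  have hcont : Continuous (fun w : F => y⁻¹ * w) := continuous_const.mul continuous_id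
  have hmem : {x : F | ∃ z ∈ L.O, x = L.ϖ ^ 1 * z} ∈ nhds (0 : F) :=
    (L.nhds_zero _).2 ⟨1, subset_rfl⟩
  have hpre : (fun w : F => y⁻¹ * w) ⁻¹' {x : F | ∃ z ∈ L.O, x = L.ϖ ^ 1 * z} ∈ nhds (0 : F) := by
    apply hcont.continuousAt.preimage_mem_nhds
    simpa using hmem
  obtain ⟨k, hk⟩ := (L.nhds_zero _).1 hpre
  obtain ⟨z, hz, hyz⟩ := h k
  have hy1 : y ∈ (fun w : F => y⁻¹ * w) ⁻¹' {x : F | ∃ z ∈ L.O, x = L.ϖ ^ 1 * z} :=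
    hk ⟨z, hz, hyz⟩
  obtain ⟨z', hz', h1⟩ := hy1
  have h1 : y⁻¹ * y = L.ϖ ^ 1 * z' := h1
  rw [inv_mul_cancel₀ hy, pow_one] at h1
  have : L.ϖ⁻¹ = z' := by
    field_simp [L.ϖ_ne_zero] at h1 ⊢
    rw [h1]
  exact L.ϖ_not_unit (this ▸ hz')

lemma NALF.exists_pow_mul_unit : ∀ N : ℕ, ∀ x ∈ L.O, x ≠ 0 →
    (¬∃ z ∈ L.O, x = L.ϖ ^ N * z) →
    ∃ (m : ℕ) (u : F), u ∈ L.O ∧ u⁻¹ ∈ L.O ∧ x = L.ϖ ^ m * u := by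
  intro N
  induction N with
  | zero => exact fun x hx hx0 hN => absurd ⟨x, hx, by simp⟩ hN
  | succ N ih =>
      intro x hx hx0 hN
      by_cases hu : x⁻¹ ∈ L.O
      · exact ⟨0, x, hx, hu, by simp⟩
      · have hx' : x / L.ϖ ∈ L.O := L.ϖ_gen x hx hu
        have hmul : L.ϖ * (x / L.ϖ) = x := by
          rw [mul_comm]; exact div_mul_cancel₀ x L.ϖ_ne_zero
        have hx'0 : x / L.ϖ ≠ 0 := by
          intro h0; rw [h0, mul_zero] at hmul; exact hx0 hmul.symm
        have hN' : ¬∃ z ∈ L.O, x / L.ϖ = L.ϖ ^ N * z := by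
          rintro ⟨z, hz, hzz⟩
          exact hN ⟨z, hz, by rw [← hmul, hzz, pow_succ]; ring⟩
        obtain ⟨m, u, hu1, hu2, hxu⟩ := ih (x / L.ϖ) hx' hx'0 hN'
        exact ⟨m + 1, u, hu1, hu2, by rw [← hmul, hxu, pow_succ]; ring⟩

lemma NALF.unit_decomp {x : F} (hx : x ∈ L.O) (hx0 : x ≠ 0) :
    ∃ (m : ℕ) (u : F), u ∈ L.O ∧ u⁻¹ ∈ L.O ∧ x = L.ϖ ^ m * u := by
  obtain ⟨N, hN⟩ := NALF.exists_not_dvd F L hx0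
  exact NALF.exists_pow_mul_unit F L N x hx hx0 hN

lemma NALF.decomp {c : F} (hc : c ≠ 0) :
    ∃ (n m : ℕ) (u : F), u ∈ L.O ∧ u⁻¹ ∈ L.O ∧ L.ϖ ^ n * c = L.ϖ ^ m * u := by
  rcases L.isValRing c hc with h | h
  · obtain ⟨m, u, h1, h2, h3⟩ := NALF.unit_decomp F L h hc
    exact ⟨0, m, u, h1, h2, by simpa using h3⟩
  · have hc' : c⁻¹ ≠ 0 := inv_ne_zero hc
    obtain ⟨m, u, h1, h2, h3⟩ := NALF.unit_decomp F L h hc'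
    refine ⟨m, 0, u⁻¹, h2, by simpa using h1, ?_⟩
    have hu0 : u ≠ 0 := by intro h0; rw [h0, mul_zero] at h3; exact hc' h3
    rw [← inv_inv c, h3, mul_inv, pow_zero, one_mul, ← mul_assoc,
      mul_inv_cancel₀ (pow_ne_zero _ L.ϖ_ne_zero), one_mul]

lemma NALF.exists_pow_mem (x : F) : ∃ n : ℕ, L.ϖ ^ n * x ∈ L.O := by
  by_cases hx : x = 0
  · exact ⟨0, by rw [hx, mul_zero]; exact L.O.zero_mem⟩
  · obtain ⟨n, m, u, h1, _, h3⟩ := NALF.decomp F L hx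
    exact ⟨n, by rw [h3]; exact L.O.mul_mem (pow_mem L.ϖ_mem m) h1⟩

end NALFAux


section GL2Aux

/-- Scalar matrices as elements of `GL(2,F)`. -/
def zScalar (d : F) (hd : d ≠ 0) : GL (Fin 2) F :=
  Matrix.GeneralLinearGroup.mkOfDetNeZero !![d, 0; 0, d]
    (by rw [Matrix.det_fin_two_of]; simpa using mul_ne_zero hd hd)

lemma zScalar_val (d : F) (hd : d ≠ 0) :
    (zScalar F d hd : Matrix (Fin 2) (Fin 2) F) = !![d, 0; 0, d] := rfl

lemma zScalar_mem_center (d : F) (hd : d ≠ 0) :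
    zScalar F d hd ∈ Subgroup.center (GL (Fin 2) F) := by
  rw [Subgroup.mem_center_iff]
  intro g
  have hsm : (!![d, 0; 0, d] : Matrix (Fin 2) (Fin 2) F) = d • 1 := by
    rw [Matrix.one_fin_two]; ext i j; fin_cases i <;> fin_cases j <;> simp
  refine Units.ext ?_
  rw [Units.val_mul, Units.val_mul, zScalar_val, hsm, smul_mul_assoc, mul_smul_comm,
    one_mul, mul_one]

lemma tGL_pow_val (n : ℕ) :
    ((tGL F L ^ n : GL (Fin 2) F) : Matrix (Fin 2) (Fin 2) F) = !![L.ϖ ^ n, 0; 0, 1] := by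
  induction n with
  | zero =>
      rw [pow_zero, Units.val_one, pow_zero, Matrix.one_fin_two]
  | succ n ih =>
      rw [pow_succ, Units.val_mul, ih, tGL_val, Matrix.mul_fin_two, pow_succ]
      norm_num

lemma tGL_pow_inv_val (n : ℕ) :
    (((tGL F L ^ n)⁻¹ : GL (Fin 2) F) : Matrix (Fin 2) (Fin 2) F)
      = !![(L.ϖ⁻¹) ^ n, 0; 0, 1] := by
  have hdet : (!![(L.ϖ⁻¹) ^ n, 0; 0, 1] : Matrix (Fin 2) (Fin 2) F).det ≠ 0 := by
    rw [Matrix.det_fin_two_of]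
    simpa using pow_ne_zero n (inv_ne_zero L.ϖ_ne_zero)
  have h : (tGL F L ^ n) * Matrix.GeneralLinearGroup.mkOfDetNeZero _ hdet = 1 := by
    refine Units.ext ?_
    rw [Units.val_mul, tGL_pow_val]
    show _ * !![(L.ϖ⁻¹) ^ n, 0; 0, 1] = _
    rw [Matrix.mul_fin_two, Units.val_one, Matrix.one_fin_two, ← mul_pow,
      mul_inv_cancel₀ L.ϖ_ne_zero, one_pow]
    norm_num
  rw [inv_eq_of_mul_eq_one_right h]
  rfl

lemma conj_val (n : ℕ) {g : GL (Fin 2) F}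
    (h10 : (g : Matrix (Fin 2) (Fin 2) F) 1 0 = 0) :
    ((tGL F L ^ n * g * (tGL F L ^ n)⁻¹ : GL (Fin 2) F) : Matrix (Fin 2) (Fin 2) F)
      = !![(g : Matrix (Fin 2) (Fin 2) F) 0 0,
          L.ϖ ^ n * (g : Matrix (Fin 2) (Fin 2) F) 0 1; 0,
          (g : Matrix (Fin 2) (Fin 2) F) 1 1] := by
  have hϖ : L.ϖ ^ n * (L.ϖ⁻¹) ^ n = 1 := by
    rw [← mul_pow, mul_inv_cancel₀ L.ϖ_ne_zero, one_pow]
  rw [Units.val_mul, Units.val_mul, tGL_pow_val, tGL_pow_inv_val]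
  conv_lhs => rw [Matrix.eta_fin_two (g : Matrix (Fin 2) (Fin 2) F)]
  rw [h10, Matrix.mul_fin_two, Matrix.mul_fin_two]
  ext i j
  fin_cases i <;> fin_cases j <;>
    simp [mul_inv_cancel₀ (pow_ne_zero n L.ϖ_ne_zero)] <;>
    field_simp [pow_ne_zero n L.ϖ_ne_zero] <;> ring

lemma conj_mem_B0gr (n : ℕ) {g : GL (Fin 2) F} (hg : g ∈ B0gr F L) :
    tGL F L ^ n * g * (tGL F L ^ n)⁻¹ ∈ B0gr F L := by
  obtain ⟨hB, hK⟩ := hg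
  obtain ⟨hK1, hK2⟩ := hK
  have h10 : (g : Matrix (Fin 2) (Fin 2) F) 1 0 = 0 := hB
  have h10' : ((g⁻¹ : GL (Fin 2) F) : Matrix (Fin 2) (Fin 2) F) 1 0 = 0 :=
    GL2.inv_entry_ne F g h10
  have hOentries : ∀ {h : GL (Fin 2) F}, (h : Matrix (Fin 2) (Fin 2) F) 1 0 = 0 →
      (∀ i j, (h : Matrix (Fin 2) (Fin 2) F) i j ∈ L.O) →
      ∀ i j, ((tGL F L ^ n * h * (tGL F L ^ n)⁻¹ : GL (Fin 2) F) :
        Matrix (Fin 2) (Fin 2) F) i j ∈ L.O := by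
    intro h hh10 hO i j
    rw [conj_val F L n hh10]
    fin_cases i <;> fin_cases j
    · simpa using hO 0 0
    · simpa using L.O.mul_mem (pow_mem L.ϖ_mem n) (hO 0 1)
    · simpa using L.O.zero_mem
    · simpa using hO 1 1
  have hinv : (tGL F L ^ n * g * (tGL F L ^ n)⁻¹)⁻¹
      = tGL F L ^ n * g⁻¹ * (tGL F L ^ n)⁻¹ := by group
  refine ⟨?_, ?_, ?_⟩
  · show ((tGL F L ^ n * g * (tGL F L ^ n)⁻¹ : GL (Fin 2) F) :
      Matrix (Fin 2) (Fin 2) F) 1 0 = 0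
    rw [conj_val F L n h10]
    simp
  · exact hOentries h10 hK1
  · rw [hinv]
    exact hOentries h10' hK2

lemma conj_mem_B0Zgr (n : ℕ) {g : GL (Fin 2) F} (hg : g ∈ B0Zgr F L) :
    tGL F L ^ n * g * (tGL F L ^ n)⁻¹ ∈ B0Zgr F L := by
  obtain ⟨b, hb, z, hz, rfl⟩ := hg
  refine ⟨tGL F L ^ n * b * (tGL F L ^ n)⁻¹, conj_mem_B0gr F L n hb, z, hz, ?_⟩
  have hcz := Subgroup.mem_center_iff.mp hz (tGL F L ^ n)⁻¹
  calc tGL F L ^ n * (b * z) * (tGL F L ^ n)⁻¹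
      = tGL F L ^ n * b * (z * (tGL F L ^ n)⁻¹) := by group
    _ = tGL F L ^ n * b * ((tGL F L ^ n)⁻¹ * z) := by rw [hcz]
    _ = tGL F L ^ n * b * (tGL F L ^ n)⁻¹ * z := by group

lemma BplusGL_mul {g h : GL (Fin 2) F} (hg : g ∈ BplusGL F L) (hh : h ∈ BplusGL F L) :
    g * h ∈ BplusGL F L := by
  obtain ⟨b, hb, n, rfl⟩ := hg
  obtain ⟨c, hc, m, rfl⟩ := hh
  refine ⟨b * (tGL F L ^ n * c * (tGL F L ^ n)⁻¹),
    (B0Zgr F L).mul_mem hb (conj_mem_B0Zgr F L n hc), n + m, ?_⟩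
  rw [pow_add]
  group

lemma B0Zb_subset_BplusB : ((B0Zb F L : Subgroup ↥(Bgr F)) : Set ↥(Bgr F)) ⊆ BplusB F L := by
  intro b hb
  exact ⟨(b : GL (Fin 2) F), hb, 0, by rw [pow_zero, mul_one]⟩

lemma BplusB_mul {g h : ↥(Bgr F)} (hg : g ∈ BplusB F L) (hh : h ∈ BplusB F L) :
    g * h ∈ BplusB F L :=
  BplusGL_mul F L hg hh

lemma tB_pow_mem_BplusB (n : ℕ) : (tB F L) ^ n ∈ BplusB F L := by
  refine ⟨1, (B0Zgr F L).one_mem, n, ?_⟩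
  rw [one_mul]
  exact SubmonoidClass.coe_pow _ n

lemma BplusB_decomp {p : ↥(Bgr F)} (hp : p ∈ BplusB F L) :
    ∃ s ∈ B0Zb F L, ∃ m : ℕ, p = s * (tB F L) ^ m := by
  obtain ⟨b, hb, m, hval⟩ := hp
  have hbB : b ∈ Bgr F := by
    have hb' : b = (p : GL (Fin 2) F) * (tGL F L ^ m)⁻¹ := by rw [hval]; group
    rw [hb']
    exact (Bgr F).mul_mem p.2 ((Bgr F).inv_mem (pow_mem (tGL_mem_Bgr F L) m))
  refine ⟨⟨b, hbB⟩, Subgroup.mem_comap.mpr hb, m, Subtype.ext ?_⟩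
  rw [hval]
  show b * tGL F L ^ m = ((⟨b, hbB⟩ : ↥(Bgr F)) * (tB F L) ^ m : ↥(Bgr F))
  rw [Subgroup.coe_mul, SubmonoidClass.coe_pow]
  rfl

lemma exists_pow_smul_mem_BplusB (b : ↥(Bgr F)) :
    ∃ n : ℕ, (tB F L) ^ n * b ∈ BplusB F L := by
  set g : Matrix (Fin 2) (Fin 2) F := ((b : GL (Fin 2) F) : Matrix (Fin 2) (Fin 2) F) with hg
  have h10 : g 1 0 = 0 := b.2
  set a : F := g 0 0 with ha
  set x : F := g 0 1 with hx
  set d : F := g 1 1 with hd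
  have hdet : g.det = a * d := by
    conv_lhs => rw [Matrix.eta_fin_two g]
    rw [h10, Matrix.det_fin_two_of]
    ring
  have had : a * d ≠ 0 := by
    have hunit : IsUnit g := ⟨(b : GL (Fin 2) F), rfl⟩
    have := (Matrix.isUnit_iff_isUnit_det g).mp hunit
    rw [hdet] at this
    exact this.ne_zero
  have haa : a ≠ 0 := fun h => had (by rw [h, zero_mul])
  have hdd : d ≠ 0 := fun h => had (by rw [h, mul_zero])
  obtain ⟨n₁, m, u, hu1, hu2, h3⟩ := NALF.decomp F L (div_ne_zero haa hdd)
  obtain ⟨n₂, hn₂⟩ := NALF.exists_pow_mem F L (x / d)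
  set n : ℕ := n₁ + n₂ with hn
  set y : F := L.ϖ ^ n * (x / d) with hy
  have hyO : y ∈ L.O := by
    rw [hy, hn, pow_add, mul_assoc]
    exact L.O.mul_mem (pow_mem L.ϖ_mem n₁) (by rw [mul_comm (L.ϖ ^ n₂)] at hn₂ ⊢; exact hn₂)
  have hu0 : u ≠ 0 := by
    intro h0
    rw [h0, mul_zero] at h3
    exact (div_ne_zero haa hdd) (by
      have := mul_eq_zero.mp h3
      rcases this with h | h
      · exact absurd h (pow_ne_zero _ L.ϖ_ne_zero)
      · exact h)
  have hb0det : (!![u, y; 0, 1] : Matrix (Fin 2) (Fin 2) F).det ≠ 0 := by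
    rw [Matrix.det_fin_two_of]; simpa using hu0
  set b₀ : GL (Fin 2) F := Matrix.GeneralLinearGroup.mkOfDetNeZero _ hb0det with hb₀
  have hb₀val : (b₀ : Matrix (Fin 2) (Fin 2) F) = !![u, y; 0, 1] := rfl
  have hb0invdet : (!![u⁻¹, -(u⁻¹ * y); 0, 1] : Matrix (Fin 2) (Fin 2) F).det ≠ 0 := by
    rw [Matrix.det_fin_two_of]; simpa using inv_ne_zero hu0
  have hb0inv : b₀⁻¹ = Matrix.GeneralLinearGroup.mkOfDetNeZero _ hb0invdet := by
    apply inv_eq_of_mul_eq_one_right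
    refine Units.ext ?_
    rw [Units.val_mul, hb₀val]
    show !![u, y; 0, 1] * !![u⁻¹, -(u⁻¹ * y); 0, 1] = _
    rw [Units.val_one, Matrix.one_fin_two, Matrix.mul_fin_two]
    ext i j
    fin_cases i <;> fin_cases j <;> simp <;> field_simp <;> ring
  have hb₀mem : b₀ ∈ B0gr F L := by
    refine ⟨?_, ?_, ?_⟩
    · show (b₀ : Matrix (Fin 2) (Fin 2) F) 1 0 = 0
      rw [hb₀val]; simp
    · intro i j
      rw [hb₀val]
      fin_cases i <;> fin_cases j
      · simpa using hu1
      · simpa using hyO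
      · simpa using L.O.zero_mem
      · simpa using L.O.one_mem
    · intro i j
      rw [hb0inv]
      show (!![u⁻¹, -(u⁻¹ * y); 0, 1] : Matrix (Fin 2) (Fin 2) F) i j ∈ L.O
      fin_cases i <;> fin_cases j
      · simpa using hu2
      · simpa using L.O.neg_mem (L.O.mul_mem hu2 hyO)
      · simpa using L.O.zero_mem
      · simpa using L.O.one_mem
  refine ⟨n, b₀ * zScalar F d hdd,
    ⟨b₀, hb₀mem, zScalar F d hdd, zScalar_mem_center F d hdd, rfl⟩, m + n₂, ?_⟩
  have hcoe : (((tB F L) ^ n * b : ↥(Bgr F)) : GL (Fin 2) F)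
      = tGL F L ^ n * (b : GL (Fin 2) F) := by
    rw [Subgroup.coe_mul, SubmonoidClass.coe_pow]; rfl
  rw [hcoe]
  refine Units.ext ?_
  rw [Units.val_mul, Units.val_mul, Units.val_mul, tGL_pow_val, hb₀val, zScalar_val, tGL_pow_val]
  conv_lhs => rw [← hg, Matrix.eta_fin_two g, h10]
  rw [Matrix.mul_fin_two, Matrix.mul_fin_two, Matrix.mul_fin_two]
  have he0 : L.ϖ ^ n * (a / d) = L.ϖ ^ (m + n₂) * u := by
    rw [hn, add_comm n₁ n₂, pow_add, mul_assoc, h3, add_comm m n₂, pow_add, mul_assoc]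
  have he1 : L.ϖ ^ n * a = u * d * L.ϖ ^ (m + n₂) := by
    have h' := congrArg (· * d) he0
    rw [mul_assoc, div_mul_cancel₀ a hdd] at h'
    rw [h']; ring
  have he2 : L.ϖ ^ n * x = y * d := by
    rw [hy, mul_assoc, div_mul_cancel₀ x hdd]
  ext i j
  fin_cases i <;> fin_cases j <;> simp
  all_goals first
    | linear_combination he1
    | linear_combination he2
    | ring

end GL2Aux

/-- `<B⁺ V₀>` does not depend on the choice of the generating finitely
generated `o[B₀Z]`-submodule `V₀`, modulo finitely generated `o[B₀Z]`-modules. -/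
theorem statement2
    (o : Type) [CommRing o] [IsNoetherianRing o]
    (F : Type) [Field F] [TopologicalSpace F] [IsTopologicalRing F] (LF : NALF F)
    (V : Type) [AddCommGroup V] [Module o V]
    [DistribMulAction (↥(Bgr F)) V] [SMulCommClass (↥(Bgr F)) o V]
    (hsm : IsSmoothRep o (↥(Bgr F)) V)
    (V0 V0' : Submodule o V)
    (hst : IsStableSub o V ((B0Zb F LF : Subgroup ↥(Bgr F)) : Set ↥(Bgr F)) V0)
    (hst' : IsStableSub o V ((B0Zb F LF : Subgroup ↥(Bgr F)) : Set ↥(Bgr F)) V0')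
    (hfg : IsFGOver o V ((B0Zb F LF : Subgroup ↥(Bgr F)) : Set ↥(Bgr F)) V0)
    (hfg' : IsFGOver o V ((B0Zb F LF : Subgroup ↥(Bgr F)) : Set ↥(Bgr F)) V0')
    (hgen : gspan o V (Set.univ : Set ↥(Bgr F)) (V0 : Set V) = ⊤)
    (hgen' : gspan o V (Set.univ : Set ↥(Bgr F)) (V0' : Set V) = ⊤) :
    ∃ M : Submodule o V,
      IsStableSub o V ((B0Zb F LF : Subgroup ↥(Bgr F)) : Set ↥(Bgr F)) M ∧
      IsFGOver o V ((B0Zb F LF : Subgroup ↥(Bgr F)) : Set ↥(Bgr F)) M ∧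
      gspan o V (BplusB F LF) (V0 : Set V) ⊔ M = gspan o V (BplusB F LF) (V0' : Set V) ⊔ M := by
  classical
  set S : Set ↥(Bgr F) := ((B0Zb F LF : Subgroup ↥(Bgr F)) : Set ↥(Bgr F)) with hSdef
  set P : Set ↥(Bgr F) := BplusB F LF with hPdef
  set τ : ↥(Bgr F) := tB F LF with hτdef
  obtain ⟨X, hXsub, hXspan⟩ := hfg
  obtain ⟨X', hX'sub, hX'span⟩ := hfg'
  have hSsub : ∀ s ∈ S, s ∈ P := fun s hs => B0Zb_subset_BplusB F LF hs
  have hPmul : ∀ p ∈ P, ∀ q ∈ P, p * q ∈ P := fun p hp q hq => BplusB_mul F LF hp hq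
  have hτpow : ∀ n : ℕ, τ ^ n ∈ P := fun n => tB_pow_mem_BplusB F LF n
  have hSP : ∀ p ∈ P, ∀ s ∈ S, p * s ∈ P := fun p hp s hs => hPmul p hp s (hSsub s hs)
  have hstabP : ∀ (W : Set V) (q : ↥(Bgr F)), q ∈ P → ∀ v, v ∈ gspan o V P W →
      q • v ∈ gspan o V P W := fun W q hq v hv =>
    smul_mem_gspan o (fun p hp => hPmul q hq p hp) hv
  have hR3 : ∀ (V1 : Submodule o V), gspan o V (Set.univ : Set ↥(Bgr F)) (V1 : Set V) = ⊤ →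
      ∀ v : V, ∃ n, τ ^ n • v ∈ gspan o V P (V1 : Set V) := by
    intro V1 hV1 v
    exact gspan_exists_pow o τ P hτpow hPmul (fun b => exists_pow_smul_mem_BplusB F LF b) V1 hV1 v
  have hall : ∀ v : V, ∃ n, τ ^ n • v ∈ gspan o V P (V0 : Set V) ∧
      τ ^ n • v ∈ gspan o V P (V0' : Set V) := by
    intro v
    obtain ⟨n1, h1⟩ := hR3 V0 hgen v
    obtain ⟨n2, h2⟩ := hR3 V0' hgen' v
    refine ⟨n1 + n2, ?_, ?_⟩
    · rw [add_comm, pow_add, mul_smul]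
      exact hstabP _ _ (hτpow n2) _ h1
    · rw [pow_add, mul_smul]
      exact hstabP _ _ (hτpow n1) _ h2
  choose f hf1 hf2 using hall
  set N : ℕ := (X ∪ X').sup f with hNdef
  have hbumpN : ∀ (V1 : Submodule o V) (x : V), f x ≤ N → τ ^ (f x) • x ∈ gspan o V P (V1 : Set V) →
      τ ^ N • x ∈ gspan o V P (V1 : Set V) := by
    intro V1 x hle hx
    rw [show N = (N - f x) + f x from (Nat.sub_add_cancel hle).symm, pow_add, mul_smul]
    exact hstabP _ _ (hτpow _) _ hx
  set Y : Finset V := ((X ∪ X') ×ˢ Finset.range N).image (fun q => τ ^ q.2 • q.1) with hYdef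
  set M : Submodule o V := gspan o V S (Y : Set V) with hMdef
  have key : ∀ (Z : Finset V), (Z : Set V) ⊆ ((X ∪ X' : Finset V) : Set V) →
      ∀ (V1 : Submodule o V),
      (∀ x ∈ Z, τ ^ N • x ∈ gspan o V P (V1 : Set V)) →
      gspan o V P (Z : Set V) ≤ gspan o V P (V1 : Set V) ⊔ M := by
    intro Z hZ V1 hZN
    refine Submodule.span_le.2 ?_
    rintro v ⟨p, hp, x, hx, rfl⟩
    obtain ⟨s, hs, m, rfl⟩ := BplusB_decomp F LF hp
    rw [mul_smul]
    by_cases hm : N ≤ m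
    · have h1 : τ ^ m • x ∈ gspan o V P (V1 : Set V) := by
        rw [show m = (m - N) + N from (Nat.sub_add_cancel hm).symm, pow_add, mul_smul]
        exact hstabP _ _ (hτpow _) _ (hZN x hx)
      exact Submodule.mem_sup_left (hstabP _ s (hSsub s hs) _ h1)
    · have hy : τ ^ m • x ∈ (Y : Set V) := by
        refine Finset.mem_coe.mpr (Finset.mem_image.mpr ⟨(x, m), ?_, rfl⟩)
        exact Finset.mem_product.mpr ⟨Finset.mem_coe.mp (hZ hx), Finset.mem_range.mpr (by omega)⟩
      exact Submodule.mem_sup_right (mem_gspan o hs hy)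
  have hPV0 : gspan o V P (V0 : Set V) = gspan o V P (X : Set V) := by
    apply le_antisymm
    · rw [hXspan]
      exact gspan_gspan_le o hSP
    · exact gspan_mono o hXsub
  have hPV0' : gspan o V P (V0' : Set V) = gspan o V P (X' : Set V) := by
    apply le_antisymm
    · rw [hX'span]
      exact gspan_gspan_le o hSP
    · exact gspan_mono o hX'sub
  have hNX : ∀ x ∈ (X ∪ X' : Finset V), τ ^ N • x ∈ gspan o V P (V0 : Set V) := by
    intro x hx
    exact hbumpN V0 x (Finset.le_sup hx) (hf1 x)
  have hNX' : ∀ x ∈ (X ∪ X' : Finset V), τ ^ N • x ∈ gspan o V P (V0' : Set V) := by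
    intro x hx
    exact hbumpN V0' x (Finset.le_sup hx) (hf2 x)
  refine ⟨M, ?_, ?_, ?_⟩
  · intro s hs v hv
    exact smul_mem_gspan o (fun s' hs' => (B0Zb F LF).mul_mem hs hs') hv
  · refine ⟨Y, ?_, rfl⟩
    intro y hy
    have h1 : (1 : ↥(Bgr F)) • y ∈ M := mem_gspan o ((B0Zb F LF).one_mem) hy
    rwa [one_smul] at h1
  · apply le_antisymm
    · refine sup_le ?_ le_sup_right
      calc gspan o V P (V0 : Set V) = gspan o V P (X : Set V) := hPV0
        _ ≤ gspan o V P (V0' : Set V) ⊔ M := by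
            refine key X ?_ V0' (fun x hx => hNX' x (Finset.mem_union_left _ hx)) |>.trans ?_
            · intro x hx
              exact Finset.mem_coe.mpr (Finset.mem_union_left _ (Finset.mem_coe.mp hx))
            · exact le_rfl
    · refine sup_le ?_ le_sup_right
      calc gspan o V P (V0' : Set V) = gspan o V P (X' : Set V) := hPV0'
        _ ≤ gspan o V P (V0 : Set V) ⊔ M := by
            refine key X' ?_ V0 (fun x hx => hNX x (Finset.mem_union_right _ hx)) |>.trans ?_
            · intro x hx
              exact Finset.mem_coe.mpr (Finset.mem_union_right _ (Finset.mem_coe.mp hx))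
            · exact le_rfl
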